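/- Let r>0 and let h:[0,r)→[0,∞) be measurable, integrable on (0,s) for every s<r, and subadditive in the sense that h(s₁)+h(s₂) ≥ h(s₁+s₂) for all s₁,s₂>0 with s₁+s₂<r. Then for every s∈(0,r), h(s) ≤ (2/s)·∫₀^s h(t) dt; consequently, the function H(s) := s⁻²·∫₀^s h(t) dt is non-increasing on (0,r). -/

import Mathlib

open MeasureTheory Set

/-- Let `r > 0` and `h : [0,r) → [0,∞)` be measurable,
integrable on `(0,s)` for every `s < r`, and subadditive
(`h(s₁+s₂) ≤ h(s₁) + h(s₂)` for `s₁, s₂ > 0` with `s₁+s₂ < r`).  Then for every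
`s ∈ (0,r)`, `h(s) ≤ (2/s) ∫₀^s h(t) dt`; consequently,
`H(s) := s⁻² ∫₀^s h(t) dt` is non-increasing on `(0,r)`. -/
theorem stmt_15 (r : ℝ) (hr : 0 < r) (h : ℝ → ℝ)
    (hh_meas : Measurable h)
    (hh_nonneg : ∀ s : ℝ, 0 ≤ s → s < r → 0 ≤ h s)
    (hh_int : ∀ s : ℝ, s < r → IntegrableOn h (Ioo 0 s))
    (hh_subadd : ∀ s₁ s₂ : ℝ, 0 < s₁ → 0 < s₂ → s₁ + s₂ < r →
      h (s₁ + s₂) ≤ h s₁ + h s₂) :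
    (∀ s : ℝ, 0 < s → s < r → h s ≤ (2 / s) * ∫ t in Ioo (0:ℝ) s, h t) ∧
    (∀ s₁ s₂ : ℝ, 0 < s₁ → s₁ ≤ s₂ → s₂ < r →
      s₂⁻¹ ^ 2 * (∫ t in Ioo (0:ℝ) s₂, h t) ≤ s₁⁻¹ ^ 2 * ∫ t in Ioo (0:ℝ) s₁, h t) := by
  set F : ℝ → ℝ := fun s => ∫ t in Ioo (0:ℝ) s, h t with hFdef
  have hIoc : ∀ s : ℝ, (∫ t in Ioc (0:ℝ) s, h t) = F s := fun s =>
    integral_Ioc_eq_integral_Ioo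
  have hintIoc : ∀ s : ℝ, s < r → IntegrableOn h (Ioc 0 s) := by
    intro s hs
    exact (hh_int s hs).congr_set_ae Ioo_ae_eq_Ioc.symm
  have part1 : ∀ s : ℝ, 0 < s → s < r → h s ≤ (2 / s) * F s := by
    intro s hs hsr
    have hint : IntegrableOn h (Ioo 0 s) := hh_int s hsr
    have hii : IntervalIntegrable h volume 0 s := by
      rw [intervalIntegrable_iff_integrableOn_Ioc_of_le hs.le]
      exact hintIoc s hsr
    have hrefl : IntegrableOn (fun t => h (s - t)) (Ioo 0 s) := by
      have h2 := (hii.comp_sub_left s).symm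
      rw [sub_zero, sub_self] at h2
      rw [intervalIntegrable_iff_integrableOn_Ioc_of_le hs.le] at h2
      exact h2.congr_set_ae Ioo_ae_eq_Ioc
    have hmono : ∀ t ∈ Ioo (0:ℝ) s, h s ≤ h t + h (s - t) := by
      intro t ht
      have := hh_subadd t (s - t) ht.1 (by linarith [ht.2]) (by linarith)
      rwa [add_sub_cancel] at this
    have hconst : (∫ _t in Ioo (0:ℝ) s, h s) = s * h s := by
      simp [Real.volume_Ioo, ENNReal.toReal_ofReal hs.le, smul_eq_mul, hs.le]
    have hre : (∫ t in Ioo (0:ℝ) s, h (s - t)) = F s := by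
      have := intervalIntegral.integral_comp_sub_left (a := (0:ℝ)) (b := s) h s
      rw [sub_zero, sub_self] at this
      rw [← integral_Ioc_eq_integral_Ioo, ← intervalIntegral.integral_of_le hs.le, this,
        intervalIntegral.integral_of_le hs.le, hIoc]
    have hineq : (∫ _t in Ioo (0:ℝ) s, h s) ≤ ∫ t in Ioo (0:ℝ) s, (h t + h (s - t)) := by
      refine setIntegral_mono_on ?_ (hint.add hrefl) measurableSet_Ioo hmono
      exact integrableOn_const (by simp [Real.volume_Ioo])
    have hsplit : (∫ t in Ioo (0:ℝ) s, (h t + h (s - t)))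
        = F s + ∫ t in Ioo (0:ℝ) s, h (s - t) := integral_add hint hrefl
    have key : s * h s ≤ 2 * F s := by
      rw [← hconst]
      calc (∫ _t in Ioo (0:ℝ) s, h s) ≤ _ := hineq
        _ = F s + ∫ t in Ioo (0:ℝ) s, h (s - t) := hsplit
        _ = 2 * F s := by rw [hre]; ring
    rw [div_mul_eq_mul_div, le_div_iff₀ hs]
    linarith
  refine ⟨part1, ?_⟩
  intro s₁ s₂ hs₁ h12 hs₂r
  have hs₂ : 0 < s₂ := lt_of_lt_of_le hs₁ h12
  set G : ℝ → ℝ := fun t => t⁻¹ ^ 2 * F t with hGdef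
  have hFc : ContinuousOn F (Icc 0 s₂) := by
    have hIcc : IntegrableOn h (Icc 0 s₂) :=
      (hh_int s₂ hs₂r).congr_set_ae Ioo_ae_eq_Icc.symm
    exact (intervalIntegral.continuousOn_primitive (f := h) (μ := volume) hIcc).congr fun x _ => (hIoc x).symm
  have hGc : ContinuousOn G (Icc s₁ s₂) := by
    have hne : ∀ x ∈ Icc s₁ s₂, x ≠ 0 := fun x hx => ne_of_gt (lt_of_lt_of_le hs₁ hx.1)
    have hsub : Icc s₁ s₂ ⊆ Icc 0 s₂ := Icc_subset_Icc hs₁.le le_rfl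
    exact ((continuousOn_id.inv₀ hne).pow 2).mul (hFc.mono hsub)
  obtain ⟨c, hc, hmax⟩ := isCompact_Icc.exists_isMaxOn (nonempty_Icc.2 h12) hGc
  set M : ℝ := G c with hMdef
  have hcpos : 0 < c := lt_of_lt_of_le hs₁ hc.1
  have hcr : c < r := lt_of_le_of_lt hc.2 hs₂r
  have hb : ∀ t ∈ Ioc s₁ c, h t ≤ 2 * M * t := by
    intro t ht
    have htpos : 0 < t := lt_trans hs₁ ht.1
    have htr : t < r := lt_of_le_of_lt (le_trans ht.2 hc.2) hs₂r
    have h1 := part1 t htpos htr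
    have hGt : G t ≤ M := hmax ⟨le_of_lt ht.1, le_trans ht.2 hc.2⟩
    have heq : (2 / t) * F t = 2 * t * G t := by
      rw [hGdef]
      field_simp
    nlinarith [h1, heq]
  have hintIoc2 : IntegrableOn h (Ioc 0 s₂) := hintIoc s₂ hs₂r
  have hi1 : IntegrableOn h (Ioc 0 s₁) := hintIoc2.mono_set (Ioc_subset_Ioc le_rfl h12)
  have hi2 : IntegrableOn h (Ioc s₁ c) :=
    hintIoc2.mono_set (Ioc_subset_Ioc hs₁.le hc.2)
  have hsplit : F c = F s₁ + ∫ t in Ioc s₁ c, h t := by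
    have hu : Ioc (0:ℝ) s₁ ∪ Ioc s₁ c = Ioc 0 c := Ioc_union_Ioc_eq_Ioc hs₁.le hc.1
    rw [← hIoc c, ← hIoc s₁, ← hu,
      setIntegral_union (Ioc_disjoint_Ioc_of_le le_rfl) measurableSet_Ioc hi1 hi2]
  have hI2 : (∫ t in Ioc s₁ c, h t) ≤ M * (c ^ 2 - s₁ ^ 2) := by
    have hmono2 : (∫ t in Ioc s₁ c, h t) ≤ ∫ t in Ioc s₁ c, 2 * M * t := by
      refine setIntegral_mono_on hi2 ?_ measurableSet_Ioc hb
      exact (Continuous.integrableOn_Ioc (by continuity))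
    have hcalc : (∫ t in Ioc s₁ c, 2 * M * t) = M * (c ^ 2 - s₁ ^ 2) := by
      rw [← intervalIntegral.integral_of_le hc.1]
      rw [intervalIntegral.integral_const_mul, integral_id]
      ring
    linarith
  have hFceq : F c = M * c ^ 2 := by
    have : M = c⁻¹ ^ 2 * F c := hMdef
    rw [this, mul_right_comm, ← mul_pow, inv_mul_cancel₀ hcpos.ne', one_pow, one_mul]
  have hMs1 : M * s₁ ^ 2 ≤ F s₁ := by
    rw [hFceq] at hsplit
    linarith
  have hG2 : G s₂ ≤ M := hmax ⟨h12, le_rfl⟩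
  have hs1ne : s₁ ≠ 0 := ne_of_gt hs₁
  have hMG1 : M ≤ s₁⁻¹ ^ 2 * F s₁ := by
    have hone : s₁ ^ 2 * s₁⁻¹ ^ 2 = 1 := by field_simp
    calc M = M * s₁ ^ 2 * s₁⁻¹ ^ 2 := by rw [mul_assoc, hone, mul_one]
      _ ≤ F s₁ * s₁⁻¹ ^ 2 := mul_le_mul_of_nonneg_right hMs1 (sq_nonneg _)
      _ = s₁⁻¹ ^ 2 * F s₁ := mul_comm _ _
  exact le_trans hG2 hMG1
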